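/- Under the standing assumptions (A1)–(A2), one has Ψ = Π^{J,I∩J}; in particular Π^{J,I∩J} ∪ Π_{I∩J} is a basis of V_J. -/

import Mathlib

open scoped Classical Pointwise

noncomputable section

namespace CoxeterCentralizer

/-- The geometric representation space `V`: formal `ℝ`-linear combinations of
the simple roots `α_s`, `s ∈ S`. -/
abbrev GV (S : Type*) := S →₀ ℝ

variable {S W : Type*} [Group W]

/-- The simple root `α_s`. -/
def alpha (s : S) : GV S := Finsupp.single s 1

/-- The value `⟨α_s, α_t⟩ = - cos (π / m(s,t))` of the bilinear form on simple roots
(`m(s,t) = 0` encodes `m(s,t) = ∞`, where the value is `-1`). -/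
def cform (M : CoxeterMatrix S) (s t : S) : ℝ :=
  if M s t = 0 then -1 else -Real.cos (Real.pi / (M s t : ℝ))

/-- The symmetric bilinear form `⟨·,·⟩` on the geometric representation space. -/
def form (M : CoxeterMatrix S) (v w : GV S) : ℝ :=
  v.sum fun s a => w.sum fun t b => a * b * cform M s t

/-- The property that a given action of `W` on `V` is the standard geometric
representation: each simple reflection acts by `s • v = v - 2⟨α_s, v⟩ α_s`. -/
def GeomAction (M : CoxeterMatrix S) (cs : CoxeterSystem M W) [MulAction W (GV S)] : Prop :=
  ∀ (s : S) (v : GV S), cs.simple s • v = v - (2 * form M (alpha s) v) • alpha s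

/-- The root system `Φ = W · Π`. -/
def Phi (M : CoxeterMatrix S) (cs : CoxeterSystem M W) [MulAction W (GV S)] : Set (GV S) :=
  {v | ∃ (w : W) (s : S), v = w • alpha s}

/-- The set of positive roots `Φ⁺ = Φ ∩ ℝ_{≥0} Π`. -/
def PhiPos (M : CoxeterMatrix S) (cs : CoxeterSystem M W) [MulAction W (GV S)] : Set (GV S) :=
  {v ∈ Phi M cs | ∀ s, 0 ≤ v s}

/-- `Φ_J`, the roots supported on `J`. -/
def PhiIn (M : CoxeterMatrix S) (cs : CoxeterSystem M W) [MulAction W (GV S)]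
    (J : Set S) : Set (GV S) :=
  {v ∈ Phi M cs | ∀ s, s ∉ J → v s = 0}

/-- `Φ_J^{⊥K}`, the roots supported on `J` orthogonal to all `α_s`, `s ∈ K`. -/
def PhiPerp (M : CoxeterMatrix S) (cs : CoxeterSystem M W) [MulAction W (GV S)]
    (J K : Set S) : Set (GV S) :=
  {v ∈ PhiIn M cs J | ∀ s ∈ K, form M v (alpha s) = 0}

/-- The reflection `s_γ = w s w⁻¹` along a root `γ = w • α_s`. -/
def sref (M : CoxeterMatrix S) (cs : CoxeterSystem M W) [MulAction W (GV S)]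
    (γ : GV S) : W :=
  if h : ∃ (w : W) (s : S), γ = w • alpha s then
    h.choose * cs.simple h.choose_spec.choose * h.choose⁻¹
  else 1

/-- The (standard) parabolic subgroup `W_I`. -/
def WP (M : CoxeterMatrix S) (cs : CoxeterSystem M W) (I : Set S) : Subgroup W :=
  Subgroup.closure (cs.simple '' I)

/-- `I ⊆ S` is of finite type if `W_I` is finite. -/
def FiniteType (M : CoxeterMatrix S) (cs : CoxeterSystem M W) (I : Set S) : Prop :=
  (WP M cs I : Set W).Finite

/-- Adjacency in the Coxeter graph: `s` and `t` are joined by an edge iff `m(s,t) ≥ 3`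
(including `m(s,t) = ∞`, encoded as `0`). -/
def Adj (M : CoxeterMatrix S) (s t : S) : Prop := 3 ≤ M s t ∨ M s t = 0

/-- `J` is adjacent to `K` if some element of `J` is joined by an edge to some element of `K`. -/
def AdjSets (M : CoxeterMatrix S) (J K : Set S) : Prop := ∃ s ∈ J, ∃ t ∈ K, Adj M s t

/-- `J` is apart from `K` if they are disjoint and not adjacent. -/
def Apart (M : CoxeterMatrix S) (J K : Set S) : Prop := J ∩ K = ∅ ∧ ¬ AdjSets M J K

/-- Connectivity within `C ⊆ S` in the Coxeter graph. -/
def ConnIn (M : CoxeterMatrix S) (C : Set S) (s t : S) : Prop :=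
  Relation.ReflTransGen (fun a b => b ∈ C ∧ Adj M a b) s t

/-- `C ⊆ S` is irreducible: nonempty and its induced Coxeter graph is connected. -/
def IsIrreducible (M : CoxeterMatrix S) (C : Set S) : Prop :=
  C.Nonempty ∧ ∀ s ∈ C, ∀ t ∈ C, ConnIn M C s t

/-- `D` is an irreducible component of `C`: a connected component of the Coxeter
graph induced on `C`. -/
def IsComponent (M : CoxeterMatrix S) (C D : Set S) : Prop :=
  ∃ s ∈ C, D = {t ∈ C | ConnIn M C s t}

/-- The Coxeter matrix of type `A_n` (standard labelling, `0`-indexed). -/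
def AMat (n : ℕ) : Fin n → Fin n → ℕ := fun i j =>
  if i = j then 1 else if i.1 + 1 = j.1 ∨ j.1 + 1 = i.1 then 3 else 2

/-- `C ⊆ S` is of the type given by the labelled Coxeter matrix `A` on `Fin n`. -/
def IsGraphType (M : CoxeterMatrix S) {n : ℕ} (A : Fin n → Fin n → ℕ) (C : Set S) : Prop :=
  ∃ r : Fin n → S, Function.Injective r ∧ C = Set.range r ∧ ∀ i j, M (r i) (r j) = A i j

/-- `I` is `A_{>1}`-free: it has no irreducible component of type `A_n`, `2 ≤ n < ∞`. -/
def AFree (M : CoxeterMatrix S) (I : Set S) : Prop :=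
  ∀ C, IsComponent M I C → ∀ n, 2 ≤ n → ¬ IsGraphType M (AMat n) C

/-- The reflection subgroup `W(Ψ)` generated by the reflections along the roots in `Ψ`. -/
def WRefl (M : CoxeterMatrix S) (cs : CoxeterSystem M W) [MulAction W (GV S)]
    (Ψ : Set (GV S)) : Subgroup W :=
  Subgroup.closure (sref M cs '' Ψ)

/-- The "root system" `W(Ψ) · Ψ` of the reflection subgroup `W(Ψ)`. -/
def orb (M : CoxeterMatrix S) (cs : CoxeterSystem M W) [MulAction W (GV S)]
    (Ψ : Set (GV S)) : Set (GV S) :=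
  {v | ∃ w ∈ WRefl M cs Ψ, ∃ γ ∈ Ψ, v = w • γ}

/-- The positive part `(W(Ψ) · Ψ)⁺` of the root system of `W(Ψ)`. -/
def orbPos (M : CoxeterMatrix S) (cs : CoxeterSystem M W) [MulAction W (GV S)]
    (Ψ : Set (GV S)) : Set (GV S) :=
  {v ∈ orb M cs Ψ | ∀ s, 0 ≤ v s}

/-- The simple system `Π(Ψ)` of the reflection subgroup `W(Ψ)`: those
`γ ∈ (W(Ψ)·Ψ)⁺` such that any expression `γ = Σ c_i • β_i` with `c_i > 0` and
`β_i ∈ (W(Ψ)·Ψ)⁺` forces `β_i = γ` for all `i`. -/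
def simpleSys (M : CoxeterMatrix S) (cs : CoxeterSystem M W) [MulAction W (GV S)]
    (Ψ : Set (GV S)) : Set (GV S) :=
  {γ ∈ orbPos M cs Ψ |
    ∀ (n : ℕ) (c : Fin n → ℝ) (β : Fin n → GV S),
      (∀ i, 0 < c i) → (∀ i, β i ∈ orbPos M cs Ψ) → γ = ∑ i, c i • β i →
      ∀ i, β i = γ}

/-- The simple system `Π^{J,K} = Π(Φ_J^{⊥K})`. -/
def PiPerp (M : CoxeterMatrix S) (cs : CoxeterSystem M W) [MulAction W (GV S)]
    (J K : Set S) : Set (GV S) :=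
  simpleSys M cs (PhiPerp M cs J K)

/-- The simple system `Π^I = Π(Φ^{⊥I})` of `W^{⊥I}`. -/
def PiI (M : CoxeterMatrix S) (cs : CoxeterSystem M W) [MulAction W (GV S)]
    (I : Set S) : Set (GV S) :=
  PiPerp M cs Set.univ I

/-- The subgroup `C_I = {w ∈ W : w • α_s = α_s for all s ∈ I}` (as a set). -/
def CIset (M : CoxeterMatrix S) (cs : CoxeterSystem M W) [MulAction W (GV S)]
    (I : Set S) : Set W :=
  {w : W | ∀ s ∈ I, w • alpha s = alpha s}

/-- The subgroup `Y_I = {w ∈ C_I : w • (Φ^{⊥I})⁺ ⊆ Φ⁺}` (as a set). -/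
def YIset (M : CoxeterMatrix S) (cs : CoxeterSystem M W) [MulAction W (GV S)]
    (I : Set S) : Set W :=
  {w ∈ CIset M cs I |
    ∀ γ ∈ PhiPerp M cs Set.univ I ∩ PhiPos M cs, w • γ ∈ PhiPos M cs}

/-- Adjacency of two simple roots of a reflection subgroup, in the Coxeter graph of the
reflection subgroup: the corresponding reflections do not commute. -/
def RootAdj (M : CoxeterMatrix S) (cs : CoxeterSystem M W) [MulAction W (GV S)]
    (β β' : GV S) : Prop :=
  β ≠ β' ∧ sref M cs β * sref M cs β' ≠ sref M cs β' * sref M cs β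

/-- Connectivity within a set `P` of roots in the Coxeter graph of the reflection
subgroup generated by the reflections along roots in `P`. -/
def RootConnIn (M : CoxeterMatrix S) (cs : CoxeterSystem M W) [MulAction W (GV S)]
    (P : Set (GV S)) (β β' : GV S) : Prop :=
  Relation.ReflTransGen (fun a b => b ∈ P ∧ RootAdj M cs a b) β β'

/-- The irreducible component of the simple system `P` containing the root `β`. -/
def RootComp (M : CoxeterMatrix S) (cs : CoxeterSystem M W) [MulAction W (GV S)]
    (P : Set (GV S)) (β : GV S) : Set (GV S) :=
  {β' ∈ P | RootConnIn M cs P β β'}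

/-- `C` is an irreducible component of the simple system `P`. -/
def IsRootComponent (M : CoxeterMatrix S) (cs : CoxeterSystem M W) [MulAction W (GV S)]
    (P C : Set (GV S)) : Prop :=
  ∃ β ∈ P, C = RootComp M cs P β

/-- The finite part `W^{⊥I}_fin` of the Coxeter system `(W^{⊥I}, R^I)`:
the subgroup generated by the finite irreducible components of `W^{⊥I}`. -/
def PerpFin (M : CoxeterMatrix S) (cs : CoxeterSystem M W) [MulAction W (GV S)]
    (I : Set S) : Subgroup W :=
  Subgroup.closure (sref M cs ''
    {β ∈ PiI M cs I | ((WRefl M cs (RootComp M cs (PiI M cs I) β) : Set W)).Finite})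

/-- The infinite part `W^{⊥I}_inf` of the Coxeter system `(W^{⊥I}, R^I)`:
the subgroup generated by the infinite irreducible components of `W^{⊥I}`. -/
def PerpInf (M : CoxeterMatrix S) (cs : CoxeterSystem M W) [MulAction W (GV S)]
    (I : Set S) : Subgroup W :=
  Subgroup.closure (sref M cs ''
    {β ∈ PiI M cs I | ¬ ((WRefl M cs (RootComp M cs (PiI M cs I) β) : Set W)).Finite})

/-- `Π_J`, the set of simple roots with index in `J`. -/
def alphaSet (J : Set S) : Set (GV S) := alpha '' J

/-- `P` is a basis of the span of `T`. -/
def IsBasisOfSpan (P T : Set (GV S)) : Prop :=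
  LinearIndependent ℝ (fun v : ↥P => (v : GV S)) ∧
    Submodule.span ℝ P = Submodule.span ℝ T

/-- The longest element `w_0(L)` of a finite parabolic subgroup `W_L`. -/
def w0 (M : CoxeterMatrix S) (cs : CoxeterSystem M W) (L : Set S) : W :=
  if h : ∃ w ∈ WP M cs L, ∀ u ∈ WP M cs L, cs.length u ≤ cs.length w then h.choose else 1

/-- `J_{∼K}`: the set of elements of `J ∪ K` lying in the same connected component of the
Coxeter graph induced on `J ∪ K` as some element of `K`. -/
def sTilde (M : CoxeterMatrix S) (J K : Set S) : Set S :=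
  {s ∈ J ∪ K | ∃ t ∈ K, ConnIn M (J ∪ K) t s}

/-- `S^{(Λ)}`: the set of injective maps (duplicate-free `Λ`-tuples) `Λ → S`. -/
def SInj (S Λ : Type*) := {x : Λ → S // Function.Injective x}

/-- `[x]`: the image of the tuple `x ∈ S^{(Λ)}`. -/
def rng {S Λ : Type*} (x : SInj S Λ) : Set S := Set.range x.1

/-- `C_{x,y} = {w ∈ W : α_{x_λ} = w • α_{y_λ} for all λ}`. -/
def Cpair (M : CoxeterMatrix S) (cs : CoxeterSystem M W) [MulAction W (GV S)]
    {Λ : Type*} (x y : SInj S Λ) : Set W :=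
  {w : W | ∀ l : Λ, w • alpha (y.1 l) = alpha (x.1 l)}

/-- `Y_{x,y} = {w ∈ C_{x,y} : w • (Φ^{⊥[y]})⁺ ⊆ Φ⁺}`. -/
def Ypair (M : CoxeterMatrix S) (cs : CoxeterSystem M W) [MulAction W (GV S)]
    {Λ : Type*} (x y : SInj S Λ) : Set W :=
  {w ∈ Cpair M cs x y |
    ∀ γ ∈ PhiPerp M cs Set.univ (rng y) ∩ PhiPos M cs, w • γ ∈ PhiPos M cs}

/-- A semi-standard decomposition `u = ω_{n-1} ⋯ ω_1 ω_0` of an element `u ∈ Y_{z,y}`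
with respect to `J ⊆ S`, with data `y^{(i)}`, `t^{(i)}`, `J^{(i)}`, supports
`K^{(i)} = ([y^{(i)}] ∪ J^{(i)})_{∼ t^{(i)}}` and
`ω_i = w_0(K^{(i)}) w_0(K^{(i)} ∖ {t^{(i)}})`. -/
structure SemiStd {S W : Type*} [Group W] (M : CoxeterMatrix S) (cs : CoxeterSystem M W)
    [MulAction W (GV S)] (Λ : Type*) (u : W) (y z : SInj S Λ) (J : Set S) where
  n : ℕ
  ys : Fin (n + 1) → SInj S Λ
  ts : Fin n → S
  Js : Fin (n + 1) → Set S
  Ks : Fin n → Set S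
  om : Fin n → W
  h_y0 : ys 0 = y
  h_yn : ys (Fin.last n) = z
  h_J0 : Js 0 = J
  h_K : ∀ i, Ks i = sTilde M (rng (ys i.castSucc) ∪ Js i.castSucc) {ts i}
  h_om : ∀ i, om i = w0 M cs (Ks i) * w0 M cs (Ks i \ {ts i})
  h_t_notin : ∀ i, ts i ∉ rng (ys i.castSucc) ∪ Js i.castSucc
  h_t_adj : ∀ i, AdjSets M {ts i} (rng (ys i.castSucc))
  h_K_fin : ∀ i, FiniteType M cs (Ks i)
  h_Y : ∀ i, om i ∈ Ypair M cs (ys i.succ) (ys i.castSucc)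
  h_J_map : ∀ i, (fun v => om i • v) '' alphaSet (Js i.castSucc) = alphaSet (Js i.succ)
  h_prod : u = (List.ofFn om).reverse.prod

variable {Λ : Type*} {M : CoxeterMatrix S} {cs : CoxeterSystem M W} [MulAction W (GV S)]

/-- `ω_i` is a wide transformation: its support intersects `J^{(i)} ∖ [y^{(i)}]`. -/
def SemiStd.Wide {u : W} {y z : SInj S Λ} {J : Set S} (D : SemiStd M cs Λ u y z J)
    (i : Fin D.n) : Prop :=
  (D.Ks i ∩ (D.Js i.castSucc \ rng (D.ys i.castSucc))).Nonempty

/-- A semi-standard decomposition is standard if the lengths add up: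
`ℓ(u) = Σ_j ℓ(ω_j)`. -/
def SemiStd.IsStd {u : W} {y z : SInj S Λ} {J : Set S} (D : SemiStd M cs Λ u y z J) : Prop :=
  cs.length u = ∑ i : Fin D.n, cs.length (D.om i)

/-! ### Auxiliary lemmas -/

section Aux

lemma cform_self (M : CoxeterMatrix S) (s : S) : cform M s s = 1 := by
  simp [cform, M.diagonal s, Real.cos_pi]

lemma cform_comm (M : CoxeterMatrix S) (s t : S) : cform M s t = cform M t s := by
  have h : M.M s t = M.M t s := M.isSymm.apply t s
  simp [cform, h]

lemma cform_eq_zero (M : CoxeterMatrix S) {s t : S} (hne : s ≠ t) (hadj : ¬ Adj M s t) :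
    cform M s t = 0 := by
  have h0 : M s t ≠ 0 := fun h => hadj (Or.inr h)
  have h3 : ¬ 3 ≤ M s t := fun h => hadj (Or.inl h)
  have h1 : M s t ≠ 1 := M.off_diagonal s t hne
  have h2 : M s t = 2 := by omega
  rw [cform, if_neg h0, h2]
  norm_num [Real.cos_pi_div_two]

lemma form_add_right (M : CoxeterMatrix S) (v w₁ w₂ : GV S) :
    form M v (w₁ + w₂) = form M v w₁ + form M v w₂ := by
  unfold form
  rw [← Finsupp.sum_add]
  apply Finsupp.sum_congr
  intro s _
  rw [Finsupp.sum_add_index'] <;> intros <;> ring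

lemma form_smul_right (M : CoxeterMatrix S) (a : ℝ) (v w : GV S) :
    form M v (a • w) = a * form M v w := by
  unfold form
  rw [Finsupp.mul_sum]
  apply Finsupp.sum_congr
  intro s _
  rw [Finsupp.sum_smul_index, Finsupp.mul_sum]
  · apply Finsupp.sum_congr; intros; ring
  · intros; ring

lemma form_comm (M : CoxeterMatrix S) (v w : GV S) : form M v w = form M w v := by
  unfold form
  rw [Finsupp.sum_comm]
  apply Finsupp.sum_congr; intro s _; apply Finsupp.sum_congr; intro t _
  rw [cform_comm]; ring

lemma form_zero_right (M : CoxeterMatrix S) (v : GV S) : form M v 0 = 0 := by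
  unfold form; simp

lemma form_zero_left (M : CoxeterMatrix S) (v : GV S) : form M 0 v = 0 := by
  rw [form_comm, form_zero_right]

lemma form_add_left (M : CoxeterMatrix S) (v₁ v₂ w : GV S) :
    form M (v₁ + v₂) w = form M v₁ w + form M v₂ w := by
  rw [form_comm, form_add_right, form_comm M w v₁, form_comm M w v₂]

lemma form_smul_left (M : CoxeterMatrix S) (a : ℝ) (v w : GV S) :
    form M (a • v) w = a * form M v w := by
  rw [form_comm, form_smul_right, form_comm]

lemma form_sub_right (M : CoxeterMatrix S) (v w₁ w₂ : GV S) :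
    form M v (w₁ - w₂) = form M v w₁ - form M v w₂ := by
  have h : w₁ - w₂ = w₁ + (-1 : ℝ) • w₂ := by module
  rw [h, form_add_right, form_smul_right]; ring

lemma form_sub_left (M : CoxeterMatrix S) (v₁ v₂ w : GV S) :
    form M (v₁ - v₂) w = form M v₁ w - form M v₂ w := by
  rw [form_comm, form_sub_right, form_comm M w v₁, form_comm M w v₂]

lemma form_neg_right (M : CoxeterMatrix S) (v w : GV S) :
    form M v (-w) = - form M v w := by
  have h : -w = (-1 : ℝ) • w := by module
  rw [h, form_smul_right]; ring

lemma form_alpha_alpha (M : CoxeterMatrix S) (s t : S) :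
    form M (alpha s) (alpha t) = cform M s t := by
  unfold form alpha
  rw [Finsupp.sum_single_index, Finsupp.sum_single_index] <;> simp

lemma form_alpha_right (M : CoxeterMatrix S) (v : GV S) (t : S) :
    form M v (alpha t) = v.sum fun s a => a * cform M s t := by
  unfold form alpha
  apply Finsupp.sum_congr
  intro s _
  rw [Finsupp.sum_single_index] <;> simp

lemma smul_lin (hact : GeomAction M cs) (w : W) :
    ∀ (a : ℝ) (u v : GV S), w • (a • u + v) = a • (w • u) + w • v := by
  have hw : w ∈ Subgroup.closure (Set.range cs.simple) := by
    rw [cs.subgroup_closure_range_simple]; trivial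
  refine Subgroup.closure_induction
    (p := fun g _ => ∀ (a : ℝ) (u v : GV S), g • (a • u + v) = a • (g • u) + g • v)
    ?_ ?_ ?_ ?_ hw
  · rintro _ ⟨s, rfl⟩ a u v
    rw [hact, hact, hact, form_add_right, form_smul_right]
    module
  · intro a u v; simp only [one_smul]
  · intro x y _ _ ihx ihy a u v
    rw [mul_smul, ihy, ihx, mul_smul, mul_smul]
  · intro x _ ih a u v
    have h := ih a (x⁻¹ • u) (x⁻¹ • v)
    rw [smul_inv_smul, smul_inv_smul] at h
    rw [← h, inv_smul_smul]

lemma smul_zero'' (hact : GeomAction M cs) (w : W) : w • (0 : GV S) = 0 := by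
  have h := smul_lin hact w 1 0 0
  simp only [one_smul, add_zero] at h
  exact (add_eq_left.mp h.symm)

lemma smul_smul'' (hact : GeomAction M cs) (w : W) (a : ℝ) (u : GV S) :
    w • (a • u) = a • (w • u) := by
  have h := smul_lin hact w a u 0
  rw [add_zero, smul_zero'' hact, add_zero] at h
  exact h

lemma smul_add'' (hact : GeomAction M cs) (w : W) (u v : GV S) :
    w • (u + v) = w • u + w • v := by
  have h := smul_lin hact w 1 u v
  simpa only [one_smul] using h

lemma smul_sub'' (hact : GeomAction M cs) (w : W) (u v : GV S) :
    w • (u - v) = w • u - w • v := by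
  have h1 : u - v = (-1 : ℝ) • v + u := by module
  rw [h1, smul_lin hact w ((-1 : ℝ)) v u, neg_one_smul]
  abel

lemma smul_neg'' (hact : GeomAction M cs) (w : W) (v : GV S) :
    w • (-v) = -(w • v) := by
  have h1 : -v = (-1 : ℝ) • v + 0 := by module
  rw [h1, smul_lin hact w ((-1 : ℝ)) v 0, smul_zero'' hact, neg_one_smul]
  abel

lemma form_smul_smul (hact : GeomAction M cs) (w : W) :
    ∀ u v : GV S, form M (w • u) (w • v) = form M u v := by
  have hw : w ∈ Subgroup.closure (Set.range cs.simple) := by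
    rw [cs.subgroup_closure_range_simple]; trivial
  refine Subgroup.closure_induction
    (p := fun g _ => ∀ u v : GV S, form M (g • u) (g • v) = form M u v)
    ?_ ?_ ?_ ?_ hw
  · rintro _ ⟨s, rfl⟩ u v
    rw [hact, hact]
    simp only [form_sub_left, form_sub_right, form_smul_left, form_smul_right,
      form_alpha_alpha, cform_self, mul_one]
    rw [form_comm M u (alpha s)]
    ring
  · intro u v; simp only [one_smul]
  · intro x y _ _ ihx ihy u v
    rw [mul_smul, mul_smul, ihx, ihy]
  · intro x _ ih u v
    have h := ih (x⁻¹ • u) (x⁻¹ • v)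
    rw [smul_inv_smul, smul_inv_smul] at h
    exact h.symm

lemma smul_mem_Phi {v : GV S} (hv : v ∈ Phi M cs) (w : W) : w • v ∈ Phi M cs := by
  obtain ⟨u, s, rfl⟩ := hv
  exact ⟨w * u, s, (mul_smul w u (alpha s)).symm⟩

lemma root_norm (hact : GeomAction M cs) {γ : GV S} (hγ : γ ∈ Phi M cs) :
    form M γ γ = 1 := by
  obtain ⟨w, s, rfl⟩ := hγ
  rw [form_smul_smul hact, form_alpha_alpha, cform_self]

lemma sref_def {γ : GV S} (hγ : γ ∈ Phi M cs) :
    ∃ (u : W) (s : S), γ = u • alpha s ∧ sref M cs γ = u * cs.simple s * u⁻¹ := by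
  have hγ' : ∃ (w : W) (s : S), γ = w • alpha s := hγ
  refine ⟨hγ'.choose, hγ'.choose_spec.choose, hγ'.choose_spec.choose_spec, ?_⟩
  rw [sref, dif_pos hγ']

lemma sref_smul (hact : GeomAction M cs) {γ : GV S} (hγ : γ ∈ Phi M cs) (v : GV S) :
    sref M cs γ • v = v - (2 * form M γ v) • γ := by
  obtain ⟨u, s, hγeq, hse⟩ := sref_def hγ
  have hform : form M γ v = form M (alpha s) (u⁻¹ • v) := by
    have h := form_smul_smul hact u (alpha s) (u⁻¹ • v)
    rwa [smul_inv_smul, ← hγeq] at h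
  rw [hse, mul_smul, mul_smul, hact, smul_sub'' hact, smul_inv_smul,
    smul_smul'' hact, ← hγeq, hform]

lemma sref_mul_self {γ : GV S} (hγ : γ ∈ Phi M cs) :
    sref M cs γ * sref M cs γ = 1 := by
  obtain ⟨u, s, _, hse⟩ := sref_def hγ
  rw [hse]
  have h : u * cs.simple s * u⁻¹ * (u * cs.simple s * u⁻¹)
      = u * (cs.simple s * cs.simple s) * u⁻¹ := by group
  rw [h, cs.simple_mul_simple_self]
  group

lemma sref_inv {γ : GV S} (hγ : γ ∈ Phi M cs) : (sref M cs γ)⁻¹ = sref M cs γ :=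
  inv_eq_of_mul_eq_one_right (sref_mul_self hγ)

lemma WRefl_mono {A B : Set (GV S)} (h : A ⊆ B) : WRefl M cs A ≤ WRefl M cs B :=
  Subgroup.closure_mono (Set.image_mono h)

lemma orb_mono {A B : Set (GV S)} (h : A ⊆ B) : orb M cs A ⊆ orb M cs B := by
  rintro _ ⟨w, hw, γ, hγ, rfl⟩
  exact ⟨w, WRefl_mono h hw, γ, h hγ, rfl⟩

lemma orbPos_mono {A B : Set (GV S)} (h : A ⊆ B) : orbPos M cs A ⊆ orbPos M cs B :=
  fun v hv => ⟨orb_mono h hv.1, hv.2⟩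

lemma orb_subset_Phi {A : Set (GV S)} (h : A ⊆ Phi M cs) : orb M cs A ⊆ Phi M cs := by
  rintro _ ⟨w, _, γ, hγ, rfl⟩
  exact smul_mem_Phi (h hγ) w

lemma mem_orb_self {A : Set (GV S)} {γ : GV S} (h : γ ∈ A) : γ ∈ orb M cs A :=
  ⟨1, one_mem _, γ, h, (one_smul W γ).symm⟩

lemma orb_stable (hact : GeomAction M cs) {A X : Set (GV S)}
    (hA : A ⊆ Phi M cs) (hAX : A ⊆ X)
    (hstab : ∀ δ ∈ A, ∀ v ∈ X, ∀ c : ℝ, v - c • δ ∈ X) :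
    orb M cs A ⊆ X := by
  rintro _ ⟨w, hw, γ, hγ, rfl⟩
  refine (Subgroup.closure_induction
    (p := fun x _ => (∀ v ∈ X, x • v ∈ X) ∧ (∀ v ∈ X, x⁻¹ • v ∈ X))
    ?_ ?_ ?_ ?_ hw).1 γ (hAX hγ)
  · rintro _ ⟨δ, hδ, rfl⟩
    have hf : ∀ v ∈ X, sref M cs δ • v ∈ X := by
      intro v hv
      rw [sref_smul hact (hA hδ)]
      exact hstab δ hδ v hv _
    refine ⟨hf, ?_⟩
    intro v hv
    rw [sref_inv (hA hδ)]
    exact hf v hv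
  · constructor <;> intro v hv <;> simpa
  · rintro x y _ _ ⟨hx1, hx2⟩ ⟨hy1, hy2⟩
    refine ⟨fun v hv => ?_, fun v hv => ?_⟩
    · rw [mul_smul]; exact hx1 _ (hy1 v hv)
    · rw [mul_inv_rev, mul_smul]; exact hy2 _ (hx2 v hv)
  · rintro x _ ⟨h1, h2⟩
    exact ⟨h2, by simpa [inv_inv] using h1⟩

lemma apply_eq_zero_of_mem_span {J : Set S} {v : GV S}
    (hv : v ∈ Submodule.span ℝ (alphaSet J)) {s : S} (hs : s ∉ J) : v s = 0 := by
  refine Submodule.span_induction (p := fun x _ => x s = 0) ?_ ?_ ?_ ?_ hv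
  · rintro _ ⟨t, htJ, rfl⟩
    exact Finsupp.single_eq_of_ne (fun h => hs (h ▸ htJ))
  · rfl
  · intro x y _ _ hx hy
    rw [Finsupp.add_apply, hx, hy, add_zero]
  · intro a x _ hx
    rw [Finsupp.smul_apply, hx, smul_zero]

lemma mem_span_alpha {J : Set S} {v : GV S} (h : ∀ s, s ∉ J → v s = 0) :
    v ∈ Submodule.span ℝ (alphaSet J) := by
  have hvs : v = v.sum fun s a => a • alpha s := by
    simp [alpha, Finsupp.smul_single, Finsupp.sum_single]
  rw [hvs]
  refine Submodule.sum_mem _ ?_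
  intro s hsupp
  refine Submodule.smul_mem _ _ (Submodule.subset_span ?_)
  have hsJ : s ∈ J := by
    by_contra h'
    exact (Finsupp.mem_support_iff.mp hsupp) (h s h')
  exact ⟨s, hsJ, rfl⟩

lemma form_span_zero {T : Set (GV S)} {γ : GV S}
    (hT : ∀ v ∈ T, form M γ v = 0) {x : GV S}
    (hx : x ∈ Submodule.span ℝ T) : form M γ x = 0 := by
  refine Submodule.span_induction (p := fun y _ => form M γ y = 0) ?_ ?_ ?_ ?_ hx
  · exact hT
  · exact form_zero_right M γ
  · intro a b _ _ ha hb
    rw [form_add_right, ha, hb, add_zero]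
  · intro a y _ hy
    rw [form_smul_right, hy, mul_zero]

lemma form_eq_zero_of_commute (hact : GeomAction M cs) {β γ : GV S}
    (hβ : β ∈ Phi M cs) (hγ : γ ∈ Phi M cs)
    (hβpos : ∀ s, 0 ≤ β s) (hγpos : ∀ s, 0 ≤ γ s) (hne : β ≠ γ)
    (hcomm : sref M cs β * sref M cs γ = sref M cs γ * sref M cs β) :
    form M β γ = 0 := by
  by_contra hc0
  have hγγ : form M γ γ = 1 := root_norm hact hγ
  have hββ : form M β β = 1 := root_norm hact hβ
  have he := congrArg (fun g : W => g • γ) hcomm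
  simp only [mul_smul] at he
  simp only [sref_smul hact hβ, sref_smul hact hγ] at he
  simp only [form_sub_right, form_smul_right, hγγ] at he
  rw [form_comm M γ β] at he
  have key : (4 * form M β γ) • β = (4 * form M β γ ^ 2) • γ := by
    linear_combination (norm := module) he
  have h4 : (4 * form M β γ) ≠ 0 := by
    intro h; exact hc0 (by linarith [mul_eq_zero.mp h])
  have hβeq : β = form M β γ • γ := by
    have h2 : (4 * form M β γ) • (form M β γ • γ) = (4 * form M β γ ^ 2) • γ := by
      rw [smul_smul]; congr 1; ring
    exact smul_right_injective _ h4 (key.trans h2.symm)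
  have hc2 : form M β γ ^ 2 = 1 := by
    rw [hβeq, form_smul_left, form_smul_right, hγγ, mul_one] at hββ
    nlinarith [hββ]
  have hfac : (form M β γ - 1) * (form M β γ + 1) = 0 := by nlinarith [hc2]
  rcases mul_eq_zero.mp hfac with h | h
  · have h1 : form M β γ = 1 := by linarith
    rw [h1, one_smul] at hβeq
    exact hne hβeq
  · have h1 : form M β γ = -1 := by linarith
    rw [h1] at hβeq
    have hγ0 : γ = 0 := by
      ext s
      have h2 := hβpos s
      rw [hβeq, Finsupp.smul_apply, smul_eq_mul] at h2
      have h3 := hγpos s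
      simp only [Finsupp.coe_zero, Pi.zero_apply]
      linarith
    rw [hγ0, form_zero_right] at hγγ
    norm_num at hγγ

end Aux


/-- Under the standing assumptions (A1)–(A2), one has `Ψ = Π^{J, I∩J}`; in particular
`Π^{J,I∩J} ∪ Π_{I∩J}` is a basis of `V_J`. -/
theorem Psi_eq_PiPerp {S W : Type*} [Group W] (M : CoxeterMatrix S)
    (cs : CoxeterSystem M W) [MulAction W (GV S)] (hact : GeomAction M cs)
    (I : Set S) (hA1 : ∀ C, IsComponent M I C → FiniteType M cs C)
    (w : W) (hw : w ∈ YIset M cs I)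
    (γ : GV S) (hγ : γ ∈ PiI M cs I) (hγfin : sref M cs γ ∈ PerpFin M cs I)
    (Ψ : Set (GV S))
    (hΨ : Ψ = {β | ∃ k : ℤ, β ∈ RootComp M cs (PiI M cs I) ((w ^ k) • γ)})
    (J : Set S) (hJfin : FiniteType M cs J)
    (hJadj : ¬ AdjSets M (I \ J) J)
    (hbasis : IsBasisOfSpan (Ψ ∪ alphaSet (I ∩ J)) (alphaSet J))
    :
    Ψ = PiPerp M cs J (I ∩ J) ∧
    IsBasisOfSpan (PiPerp M cs J (I ∩ J) ∪ alphaSet (I ∩ J)) (alphaSet J) := by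
  classical
  have hKI : I ∩ J ⊆ I := Set.inter_subset_left
  have hPerpI_Phi : PhiPerp M cs Set.univ I ⊆ Phi M cs := fun v hv => hv.1.1
  have hΨ'_Phi : PhiPerp M cs J (I ∩ J) ⊆ Phi M cs := fun v hv => hv.1.1
  -- roots supported on `J` are orthogonal to `α_t` for `t ∈ I \ J`
  have hsupp_orth : ∀ v : GV S, (∀ s, s ∉ J → v s = 0) →
      ∀ t, t ∈ I → t ∉ J → form M v (alpha t) = 0 := by
    intro v hsupp t htI htJ
    rw [form_alpha_right]
    apply Finset.sum_eq_zero
    intro s hs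
    dsimp only
    have hsJ : s ∈ J := by
      by_contra h'
      exact (Finsupp.mem_support_iff.mp hs) (hsupp s h')
    have hne : s ≠ t := fun h => htJ (h ▸ hsJ)
    have hnadj : ¬ Adj M t s := fun hadj => hJadj ⟨t, ⟨htI, htJ⟩, s, hsJ, hadj⟩
    rw [cform_comm, cform_eq_zero M (Ne.symm hne) hnadj, mul_zero]
  -- `Φ_J^{⊥ I∩J} ⊆ Φ^{⊥ I}`
  have hΨ'_perpI : PhiPerp M cs J (I ∩ J) ⊆ PhiPerp M cs Set.univ I := by
    rintro v ⟨⟨hvΦ, hvsupp⟩, hvorth⟩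
    refine ⟨⟨hvΦ, fun s hs => absurd (Set.mem_univ s) hs⟩, ?_⟩
    intro t htI
    by_cases htJ : t ∈ J
    · exact hvorth t ⟨htI, htJ⟩
    · exact hsupp_orth v hvsupp t htI htJ
  -- stability set
  set X : Set (GV S) :=
    {v : GV S | (∀ s, s ∉ J → v s = 0) ∧ ∀ t ∈ I, form M v (alpha t) = 0} with hXdef
  have hΨ'_X : PhiPerp M cs J (I ∩ J) ⊆ X := fun v hv => ⟨hv.1.2, (hΨ'_perpI hv).2⟩
  have horbX : orb M cs (PhiPerp M cs J (I ∩ J)) ⊆ X := by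
    apply orb_stable hact hΨ'_Phi hΨ'_X
    intro δ hδ v hv c
    obtain ⟨hδ1, hδ2⟩ := hΨ'_X hδ
    constructor
    · intro s hs
      rw [Finsupp.sub_apply, Finsupp.smul_apply, hv.1 s hs, hδ1 s hs]
      simp
    · intro t ht
      rw [form_sub_left, form_smul_left, hv.2 t ht, hδ2 t ht]
      ring
  have hperpI_X' : orb M cs (PhiPerp M cs Set.univ I) ⊆
      {v : GV S | ∀ t ∈ I, form M v (alpha t) = 0} := by
    apply orb_stable hact hPerpI_Phi (fun v hv => hv.2)
    intro δ hδ v hv c t ht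
    rw [form_sub_left, form_smul_left, hv t ht, hδ.2 t ht]
    ring
  -- basic facts about Ψ
  have hΨ_PiI : Ψ ⊆ PiI M cs I := by
    intro β hβ
    rw [hΨ] at hβ
    obtain ⟨k, hk⟩ := hβ
    exact hk.1
  have hΨ_span : ∀ β ∈ Ψ, β ∈ Submodule.span ℝ (alphaSet J) := by
    intro β hβ
    rw [← hbasis.2]
    exact Submodule.subset_span (Set.mem_union_left _ hβ)
  have hΨ_Ψ' : Ψ ⊆ PhiPerp M cs J (I ∩ J) := by
    intro β hβ
    have hβo : β ∈ orbPos M cs (PhiPerp M cs Set.univ I) := (hΨ_PiI hβ).1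
    have hβΦ : β ∈ Phi M cs := orb_subset_Phi hPerpI_Phi hβo.1
    have hβsupp : ∀ s, s ∉ J → β s = 0 :=
      fun s hs => apply_eq_zero_of_mem_span (hΨ_span β hβ) hs
    have hβorth : ∀ t ∈ I, form M β (alpha t) = 0 := hperpI_X' hβo.1
    exact ⟨⟨hβΦ, hβsupp⟩, fun t ht => hβorth t (hKI ht)⟩
  -- Goal 1 : Ψ ⊆ Π^{J,I∩J}
  have hgoal1 : Ψ ⊆ PiPerp M cs J (I ∩ J) := by
    intro β hβ
    have hβPiI := hΨ_PiI hβ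
    refine ⟨⟨mem_orb_self (hΨ_Ψ' hβ), hβPiI.1.2⟩, ?_⟩
    intro n c βv hc hβv heq
    exact hβPiI.2 n c βv hc (fun i => orbPos_mono hΨ'_perpI (hβv i)) heq
  -- Goal 2 : Π^{J,I∩J} ⊆ Ψ
  have hgoal2 : PiPerp M cs J (I ∩ J) ⊆ Ψ := by
    intro γ' hγ'
    have hγ'Φ : γ' ∈ Phi M cs := orb_subset_Phi hΨ'_Phi hγ'.1.1
    have hγ'X : γ' ∈ X := horbX hγ'.1.1
    have hγ'pos : ∀ s, 0 ≤ γ' s := hγ'.1.2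
    -- `γ' ∈ Π^I`
    have hγ'PiI : γ' ∈ PiI M cs I := by
      refine ⟨⟨orb_mono hΨ'_perpI hγ'.1.1, hγ'pos⟩, ?_⟩
      intro n c βv hc hβv heq
      refine hγ'.2 n c βv hc ?_ heq
      intro i
      have hβΦ : βv i ∈ Phi M cs := orb_subset_Phi hPerpI_Phi (hβv i).1
      have hβorth : ∀ t ∈ I, form M (βv i) (alpha t) = 0 := hperpI_X' (hβv i).1
      have hβpos : ∀ s, 0 ≤ βv i s := (hβv i).2
      have hβsupp : ∀ s, s ∉ J → βv i s = 0 := by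
        intro s hs
        have h0 : γ' s = 0 := hγ'X.1 s hs
        rw [heq] at h0
        have h0' : ∑ j, c j * βv j s = 0 := by
          rw [← h0, Finset.sum_apply']
          exact Finset.sum_congr rfl fun j _ => by
            rw [Finsupp.smul_apply, smul_eq_mul]
        have hterm := (Finset.sum_eq_zero_iff_of_nonneg
          (fun j _ => mul_nonneg (le_of_lt (hc j)) ((hβv j).2 s))).mp h0' i
          (Finset.mem_univ i)
        rcases mul_eq_zero.mp hterm with h | h
        · exact absurd h (ne_of_gt (hc i))
        · exact h
      exact ⟨mem_orb_self ⟨⟨hβΦ, hβsupp⟩, fun t ht => hβorth t (hKI ht)⟩, hβpos⟩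
    -- conclude `γ' ∈ Ψ`
    by_contra hnot
    have horthΨ : ∀ v ∈ Ψ ∪ alphaSet (I ∩ J), form M γ' v = 0 := by
      rintro v (hvΨ | ⟨k, hkK, rfl⟩)
      · have hnadj : ¬ RootAdj M cs v γ' := by
          intro hadj
          apply hnot
          rw [hΨ] at hvΨ ⊢
          obtain ⟨k, hk⟩ := hvΨ
          exact ⟨k, hγ'PiI, Relation.ReflTransGen.tail hk.2 ⟨hγ'PiI, hadj⟩⟩
        by_cases hveq : v = γ'
        · exact absurd (hveq ▸ hvΨ) hnot
        have hcomm : sref M cs v * sref M cs γ' = sref M cs γ' * sref M cs v := by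
          by_contra hne'
          exact hnadj ⟨hveq, hne'⟩
        rw [form_comm]
        exact form_eq_zero_of_commute hact ((hΨ_Ψ' hvΨ)).1.1 hγ'Φ
          (hΨ_PiI hvΨ).1.2 hγ'pos hveq hcomm
      · exact hγ'X.2 k (hKI hkK)
    have hγ'span : γ' ∈ Submodule.span ℝ (Ψ ∪ alphaSet (I ∩ J)) := by
      rw [hbasis.2]
      exact mem_span_alpha hγ'X.1
    have h0 : form M γ' γ' = 0 := form_span_zero horthΨ hγ'span
    rw [root_norm hact hγ'Φ] at h0
    norm_num at h0
  have hmain : Ψ = PiPerp M cs J (I ∩ J) := Set.Subset.antisymm hgoal1 hgoal2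
  refine ⟨hmain, ?_⟩
  rw [← hmain]
  exact hbasis


end CoxeterCentralizer
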